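/- Let X_l = U_l Σ_l V_l^* and X = U Σ V^* be two m×n matrices of rank r, given by their reduced singular value decompositions (so U_l, U ∈ ℝ^{m×r} and V_l, V ∈ ℝ^{n×r} have orthonormal columns and Σ_l, Σ are r×r diagonal with positive diagonal entries). Then ‖U_l U_l^* − U U^*‖_2 ≤ ‖X_l − X‖_2 / σ_min(X) and ‖V_l V_l^* − V V^*‖_2 ≤ ‖X_l − X‖_2 / σ_min(X). -/

import Mathlib

open Matrix BigOperators

/-- Frobenius inner product of two real matrices. -/
noncomputable def frobInner {m n : ℕ} (A B : Matrix (Fin m) (Fin n) ℝ) : ℝ :=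
  ∑ i, ∑ j, A i j * B i j

/-- Frobenius norm of a real matrix. -/
noncomputable def frobNorm {m n : ℕ} (A : Matrix (Fin m) (Fin n) ℝ) : ℝ :=
  Real.sqrt (∑ i, ∑ j, (A i j) ^ 2)

/-- Euclidean inner product on `ℝ^p`. -/
noncomputable def euclInner {p : ℕ} (x y : Fin p → ℝ) : ℝ := ∑ i, x i * y i

/-- Euclidean norm on `ℝ^p`. -/
noncomputable def euclNorm {p : ℕ} (x : Fin p → ℝ) : ℝ := Real.sqrt (∑ i, (x i) ^ 2)

/-- `R` is the restricted isometry constant of order `s` of the linear map `A`: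
the smallest number `t` such that `(1-t)‖Z‖_F² ≤ ‖A Z‖₂² ≤ (1+t)‖Z‖_F²`
for all matrices `Z` of rank at most `s`. -/
def IsRIC {m n p : ℕ} (A : Matrix (Fin m) (Fin n) ℝ →ₗ[ℝ] (Fin p → ℝ)) (s : ℕ) (R : ℝ) :
    Prop :=
  IsLeast {t : ℝ | ∀ Z : Matrix (Fin m) (Fin n) ℝ, Z.rank ≤ s →
    (1 - t) * (frobNorm Z) ^ 2 ≤ (euclNorm (A Z)) ^ 2 ∧
      (euclNorm (A Z)) ^ 2 ≤ (1 + t) * (frobNorm Z) ^ 2} R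

/-- Orthogonal projection onto the tangent space of the rank-`r` manifold at
`U * Σ * Vᵀ`: `P(Z) = U Uᵀ Z + Z V Vᵀ − U Uᵀ Z V Vᵀ`. -/
noncomputable def tangentProj {m n r : ℕ} (U : Matrix (Fin m) (Fin r) ℝ)
    (V : Matrix (Fin n) (Fin r) ℝ) (Z : Matrix (Fin m) (Fin n) ℝ) :
    Matrix (Fin m) (Fin n) ℝ :=
  U * Uᵀ * Z + Z * (V * Vᵀ) - U * Uᵀ * Z * (V * Vᵀ)

/-- Spectral (operator) norm of a real matrix. -/
noncomputable def specNorm {m n : ℕ} (A : Matrix (Fin m) (Fin n) ℝ) : ℝ :=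
  sSup {c : ℝ | ∃ x : Fin n → ℝ, euclNorm x ≤ 1 ∧ c = euclNorm (A.mulVec x)}

namespace SSB

lemma dot_self_nonneg {p : ℕ} (x : Fin p → ℝ) : 0 ≤ x ⬝ᵥ x := by
  unfold dotProduct
  exact Finset.sum_nonneg fun i _ => mul_self_nonneg _

lemma euclNorm_eq_sqrt_dot {p : ℕ} (x : Fin p → ℝ) : euclNorm x = Real.sqrt (x ⬝ᵥ x) := by
  unfold euclNorm dotProduct
  congr 1
  exact Finset.sum_congr rfl fun i _ => sq (x i)

lemma euclNorm_nonneg {p : ℕ} (x : Fin p → ℝ) : 0 ≤ euclNorm x := Real.sqrt_nonneg _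

lemma sq_euclNorm {p : ℕ} (x : Fin p → ℝ) : (euclNorm x) ^ 2 = x ⬝ᵥ x := by
  rw [euclNorm_eq_sqrt_dot, Real.sq_sqrt (dot_self_nonneg x)]

lemma euclNorm_eq_norm {p : ℕ} (x : Fin p → ℝ) :
    euclNorm x = ‖(WithLp.equiv 2 (Fin p → ℝ)).symm x‖ := by
  rw [EuclideanSpace.norm_eq]
  unfold euclNorm
  congr 1
  refine Finset.sum_congr rfl fun i _ => ?_
  show x i ^ 2 = ‖x i‖ ^ 2
  rw [Real.norm_eq_abs, sq_abs]

lemma euclNorm_eq_zero {p : ℕ} {x : Fin p → ℝ} (h : euclNorm x = 0) : x = 0 := by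
  have := euclNorm_eq_norm x
  rw [h] at this
  have := (norm_eq_zero.mp this.symm)
  have : x = (WithLp.equiv 2 (Fin p → ℝ)) 0 := by rw [← this]; rfl
  simpa using this

noncomputable def clm {m n : ℕ} (A : Matrix (Fin m) (Fin n) ℝ) :
    EuclideanSpace ℝ (Fin n) →L[ℝ] EuclideanSpace ℝ (Fin m) :=
  LinearMap.toContinuousLinearMap (Matrix.toEuclideanLin A)

lemma clm_apply {m n : ℕ} (A : Matrix (Fin m) (Fin n) ℝ) (x : Fin n → ℝ) :
    clm A ((WithLp.equiv 2 (Fin n → ℝ)).symm x) = (WithLp.equiv 2 (Fin m → ℝ)).symm (A *ᵥ x) := by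
  rfl

lemma spec_eq_opNorm {m n : ℕ} (A : Matrix (Fin m) (Fin n) ℝ) : specNorm A = ‖clm A‖ := by
  rw [← ContinuousLinearMap.sSup_unitClosedBall_eq_norm]
  unfold specNorm
  congr 1
  ext c
  constructor
  · rintro ⟨x, hx, rfl⟩
    refine ⟨(WithLp.equiv 2 (Fin n → ℝ)).symm x, ?_, ?_⟩
    · rw [Metric.mem_closedBall, dist_zero_right, ← euclNorm_eq_norm]; exact hx
    · show ‖clm A ((WithLp.equiv 2 (Fin n → ℝ)).symm x)‖ = euclNorm (A *ᵥ x)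
      rw [clm_apply, ← euclNorm_eq_norm]
  · rintro ⟨y, hy, rfl⟩
    refine ⟨WithLp.equiv 2 (Fin n → ℝ) y, ?_, ?_⟩
    · rw [euclNorm_eq_norm]
      have hy' := Metric.mem_closedBall.mp hy
      rw [dist_zero_right] at hy'
      simpa using hy'
    · have he : (WithLp.equiv 2 (Fin n → ℝ)).symm ((WithLp.equiv 2 (Fin n → ℝ)) y) = y := by simp
      show _ = euclNorm (A *ᵥ (WithLp.equiv 2 (Fin n → ℝ)) y)
      conv_lhs => rw [← he]
      show ‖clm A ((WithLp.equiv 2 (Fin n → ℝ)).symm ((WithLp.equiv 2 (Fin n → ℝ)) y))‖ = _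
      rw [clm_apply, ← euclNorm_eq_norm]

lemma spec_nonneg {m n : ℕ} (A : Matrix (Fin m) (Fin n) ℝ) : 0 ≤ specNorm A := by
  rw [spec_eq_opNorm]; exact norm_nonneg _

lemma spec_mulVec_le {m n : ℕ} (A : Matrix (Fin m) (Fin n) ℝ) (x : Fin n → ℝ) :
    euclNorm (A *ᵥ x) ≤ specNorm A * euclNorm x := by
  rw [spec_eq_opNorm, euclNorm_eq_norm, euclNorm_eq_norm, ← clm_apply]
  exact (clm A).le_opNorm _

lemma spec_le_bound {m n : ℕ} (A : Matrix (Fin m) (Fin n) ℝ) {c : ℝ} (hc : 0 ≤ c)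
    (h : ∀ x, euclNorm (A *ᵥ x) ≤ c * euclNorm x) : specNorm A ≤ c := by
  rw [spec_eq_opNorm]
  refine ContinuousLinearMap.opNorm_le_bound _ hc fun y => ?_
  have := h (WithLp.equiv 2 (Fin n → ℝ) y)
  rw [euclNorm_eq_norm, euclNorm_eq_norm] at this
  rw [← clm_apply] at this
  simpa using this


lemma en_le_of_sq {p q : ℕ} {x : Fin p → ℝ} {y : Fin q → ℝ} {c : ℝ} (hc : 0 ≤ c)
    (h : x ⬝ᵥ x ≤ c ^ 2 * (y ⬝ᵥ y)) : euclNorm x ≤ c * euclNorm y := by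
  rw [euclNorm_eq_sqrt_dot, euclNorm_eq_sqrt_dot]
  calc Real.sqrt (x ⬝ᵥ x) ≤ Real.sqrt (c ^ 2 * (y ⬝ᵥ y)) := Real.sqrt_le_sqrt h
  _ = c * Real.sqrt (y ⬝ᵥ y) := by
      rw [Real.sqrt_mul (sq_nonneg c), Real.sqrt_sq hc]

lemma dotmm {p q s : ℕ} (M : Matrix (Fin p) (Fin q) ℝ) (N : Matrix (Fin p) (Fin s) ℝ)
    (x : Fin q → ℝ) (y : Fin s → ℝ) :
    (M *ᵥ x) ⬝ᵥ (N *ᵥ y) = x ⬝ᵥ ((Mᵀ * N) *ᵥ y) := by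
  rw [← Matrix.mulVec_mulVec, Matrix.dotProduct_mulVec x Mᵀ, Matrix.vecMul_transpose]

lemma dot_le_norms {p : ℕ} (x y : Fin p → ℝ) : x ⬝ᵥ y ≤ euclNorm x * euclNorm y := by
  have := real_inner_le_norm ((WithLp.equiv 2 (Fin p → ℝ)).symm x)
    ((WithLp.equiv 2 (Fin p → ℝ)).symm y)
  rw [← euclNorm_eq_norm, ← euclNorm_eq_norm] at this
  refine le_trans (le_of_eq ?_) this
  rw [PiLp.inner_apply]
  exact Finset.sum_congr rfl fun i _ => by simp [RCLike.inner_apply]; ring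

lemma spec_mul_le {p q s : ℕ} (A : Matrix (Fin p) (Fin q) ℝ) (B : Matrix (Fin q) (Fin s) ℝ) :
    specNorm (A * B) ≤ specNorm A * specNorm B := by
  refine spec_le_bound _ (mul_nonneg (spec_nonneg A) (spec_nonneg B)) fun x => ?_
  rw [← Matrix.mulVec_mulVec]
  calc euclNorm (A *ᵥ (B *ᵥ x)) ≤ specNorm A * euclNorm (B *ᵥ x) := spec_mulVec_le _ _
  _ ≤ specNorm A * (specNorm B * euclNorm x) :=
      mul_le_mul_of_nonneg_left (spec_mulVec_le _ _) (spec_nonneg A)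
  _ = specNorm A * specNorm B * euclNorm x := by ring

lemma spec_transpose_le {p q : ℕ} (A : Matrix (Fin p) (Fin q) ℝ) :
    specNorm Aᵀ ≤ specNorm A := by
  refine spec_le_bound _ (spec_nonneg A) fun x => ?_
  rcases eq_or_lt_of_le (euclNorm_nonneg (Aᵀ *ᵥ x)) with h0 | h0
  · rw [← h0]
    exact mul_nonneg (spec_nonneg A) (euclNorm_nonneg x)
  · have key : (euclNorm (Aᵀ *ᵥ x)) ^ 2 ≤ specNorm A * euclNorm x * euclNorm (Aᵀ *ᵥ x) := by
      rw [sq_euclNorm]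
      calc (Aᵀ *ᵥ x) ⬝ᵥ (Aᵀ *ᵥ x) = x ⬝ᵥ ((Aᵀᵀ * Aᵀ) *ᵥ x) := dotmm _ _ _ _
      _ = x ⬝ᵥ (A *ᵥ (Aᵀ *ᵥ x)) := by
            rw [Matrix.transpose_transpose, Matrix.mulVec_mulVec]
      _ ≤ euclNorm x * euclNorm (A *ᵥ (Aᵀ *ᵥ x)) := dot_le_norms _ _
      _ ≤ euclNorm x * (specNorm A * euclNorm (Aᵀ *ᵥ x)) :=
          mul_le_mul_of_nonneg_left (spec_mulVec_le _ _) (euclNorm_nonneg x)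
      _ = specNorm A * euclNorm x * euclNorm (Aᵀ *ᵥ x) := by ring
    nlinarith [key, h0]

lemma spec_transpose {p q : ℕ} (A : Matrix (Fin p) (Fin q) ℝ) : specNorm Aᵀ = specNorm A :=
  le_antisymm (spec_transpose_le A) (by
    have := spec_transpose_le Aᵀ
    rwa [Matrix.transpose_transpose] at this)

lemma euclNorm_neg {p : ℕ} (x : Fin p → ℝ) : euclNorm (-x) = euclNorm x := by
  unfold euclNorm
  congr 1
  exact Finset.sum_congr rfl fun i _ => by simp

lemma spec_neg {p q : ℕ} (A : Matrix (Fin p) (Fin q) ℝ) : specNorm (-A) = specNorm A := by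
  have key : ∀ (B : Matrix (Fin p) (Fin q) ℝ), specNorm (-B) ≤ specNorm B := fun B => by
    refine spec_le_bound _ (spec_nonneg B) fun x => ?_
    rw [Matrix.neg_mulVec, euclNorm_neg]
    exact spec_mulVec_le _ _
  refine le_antisymm (key A) ?_
  have := key (-A)
  rwa [neg_neg] at this

lemma spec_sub_comm {p q : ℕ} (A B : Matrix (Fin p) (Fin q) ℝ) :
    specNorm (A - B) = specNorm (B - A) := by
  rw [← spec_neg (A - B), neg_sub]

lemma cancel {p q s : ℕ} {W : Matrix (Fin p) (Fin q) ℝ} (hW : Wᵀ * W = 1)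
    (Z : Matrix (Fin q) (Fin s) ℝ) : Wᵀ * (W * Z) = Z := by
  rw [← Matrix.mul_assoc, hW, Matrix.one_mul]

lemma spec_orth {p q : ℕ} {W : Matrix (Fin p) (Fin q) ℝ} (hW : Wᵀ * W = 1) :
    specNorm W ≤ 1 := by
  refine spec_le_bound _ zero_le_one fun x => ?_
  refine en_le_of_sq zero_le_one ?_
  rw [dotmm, hW, Matrix.one_mulVec, one_pow, one_mul]

lemma spec_orth_t {p q : ℕ} {W : Matrix (Fin p) (Fin q) ℝ} (hW : Wᵀ * W = 1) :
    specNorm Wᵀ ≤ 1 := by rw [spec_transpose]; exact spec_orth hW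

lemma proj_idem {p q : ℕ} {W : Matrix (Fin p) (Fin q) ℝ} (hW : Wᵀ * W = 1) :
    (1 - W * Wᵀ) * (1 - W * Wᵀ) = 1 - W * Wᵀ := by
  simp only [Matrix.mul_sub, Matrix.sub_mul, Matrix.one_mul, Matrix.mul_one,
    Matrix.mul_assoc, cancel hW]
  abel

lemma proj_symm {p q : ℕ} (W : Matrix (Fin p) (Fin q) ℝ) :
    (1 - W * Wᵀ)ᵀ = 1 - W * Wᵀ := by
  rw [Matrix.transpose_sub, Matrix.transpose_one, Matrix.transpose_mul,
    Matrix.transpose_transpose]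

lemma spec_proj {p q : ℕ} {W : Matrix (Fin p) (Fin q) ℝ} (hW : Wᵀ * W = 1) :
    specNorm (1 - W * Wᵀ) ≤ 1 := by
  refine spec_le_bound _ zero_le_one fun x => ?_
  refine en_le_of_sq zero_le_one ?_
  rw [one_pow, one_mul, dotmm, proj_symm, proj_idem hW, Matrix.sub_mulVec,
    dotProduct_sub, Matrix.one_mulVec]
  have h := dot_self_nonneg (Wᵀ *ᵥ x)
  rw [dotmm, Matrix.transpose_transpose] at h
  linarith

lemma sin_sq {p q : ℕ} {W Y : Matrix (Fin p) (Fin q) ℝ} (hW : Wᵀ * W = 1) (hY : Yᵀ * Y = 1)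
    (z : Fin q → ℝ) :
    (((1 - W * Wᵀ) * Y) *ᵥ z) ⬝ᵥ (((1 - W * Wᵀ) * Y) *ᵥ z)
      = z ⬝ᵥ z - ((Wᵀ * Y) *ᵥ z) ⬝ᵥ ((Wᵀ * Y) *ᵥ z) := by
  rw [dotmm, dotmm]
  have hM : ((1 - W * Wᵀ) * Y)ᵀ * ((1 - W * Wᵀ) * Y) = 1 - (Wᵀ * Y)ᵀ * (Wᵀ * Y) := by
    rw [Matrix.transpose_mul, proj_symm]
    simp only [Matrix.transpose_mul, Matrix.transpose_transpose, Matrix.mul_sub,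
      Matrix.sub_mul, Matrix.one_mul, Matrix.mul_one, Matrix.mul_assoc, cancel hW, cancel hY, hY]
    abel
  rw [hM, Matrix.sub_mulVec, dotProduct_sub, Matrix.one_mulVec]

lemma aux {m n r : ℕ} (hr : 0 < r)
    (Xl X : Matrix (Fin m) (Fin n) ℝ)
    (Ul U : Matrix (Fin m) (Fin r) ℝ) (Vl V : Matrix (Fin n) (Fin r) ℝ)
    (Sl S : Matrix (Fin r) (Fin r) ℝ)
    (hUl : Ulᵀ * Ul = 1) (hVl : Vlᵀ * Vl = 1)
    (hU : Uᵀ * U = 1) (hV : Vᵀ * V = 1)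
    (hSl : Sl.IsDiag ∧ ∀ i, 0 < Sl i i) (hS : S.IsDiag ∧ ∀ i, 0 < S i i)
    (hXlsvd : Xl = Ul * Sl * Vlᵀ) (hXsvd : X = U * S * Vᵀ) :
    specNorm (Ul * Ulᵀ - U * Uᵀ) ≤ specNorm (Xl - X) / (⨅ i, S i i) := by
  haveI : Nonempty (Fin r) := ⟨⟨0, hr⟩⟩
  obtain ⟨hSd, hSpos⟩ := hS
  set σ : ℝ := ⨅ i, S i i with hσdef
  have hbdd : BddBelow (Set.range fun i => S i i) := Set.Finite.bddBelow (Set.finite_range _)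
  have hσle : ∀ i, σ ≤ S i i := fun i => ciInf_le hbdd i
  have hσpos : 0 < σ := by
    obtain ⟨i0, hi0⟩ := Finite.exists_min fun i => S i i
    have h : σ = S i0 i0 := le_antisymm (ciInf_le hbdd i0) (le_ciInf hi0)
    rw [h]; exact hSpos i0
  set δ : ℝ := specNorm (Xl - X) with hδdef
  have hδ0 : 0 ≤ δ := spec_nonneg _
  set c : ℝ := δ / σ with hcdef
  have hc0 : 0 ≤ c := div_nonneg hδ0 hσpos.le
  set S' : Matrix (Fin r) (Fin r) ℝ := Matrix.diagonal fun i => (S i i)⁻¹ with hS'def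
  have hSS' : S * S' = 1 := by
    conv_lhs => rw [← hSd.diagonal_diag]
    rw [hS'def, Matrix.diagonal_mul_diagonal,
      show (fun i => S.diag i * (S i i)⁻¹) = fun _ => (1 : ℝ) from
        funext fun i => mul_inv_cancel₀ (hSpos i).ne',
      Matrix.diagonal_one]
  have hspecS' : specNorm S' ≤ σ⁻¹ := by
    refine spec_le_bound _ (inv_nonneg.mpr hσpos.le) fun x => ?_
    refine en_le_of_sq (inv_nonneg.mpr hσpos.le) ?_
    rw [dotProduct, dotProduct, Finset.mul_sum]
    refine Finset.sum_le_sum fun i _ => ?_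
    rw [hS'def, Matrix.mulVec_diagonal]
    have h1 : (S i i)⁻¹ ≤ σ⁻¹ := inv_anti₀ hσpos (hσle i)
    have h2 : 0 ≤ (S i i)⁻¹ := inv_nonneg.mpr (hSpos i).le
    have h3 : (S i i)⁻¹ * (S i i)⁻¹ ≤ σ⁻¹ * σ⁻¹ :=
      mul_le_mul h1 h1 h2 (inv_nonneg.mpr hσpos.le)
    nlinarith [mul_self_nonneg (x i)]
  have hkill : (1 - Ul * Ulᵀ) * Xl = 0 := by
    rw [hXlsvd]
    simp only [Matrix.sub_mul, Matrix.one_mul, Matrix.mul_assoc, cancel hUl]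
    exact sub_self _
  have hXVS : X * (V * S') = U := by
    rw [hXsvd]
    simp only [Matrix.mul_assoc, cancel hV]
    rw [hSS', Matrix.mul_one]
  have ha : specNorm ((1 - Ul * Ulᵀ) * U) ≤ c := by
    have f1 : specNorm ((1 - Ul * Ulᵀ) * (X - Xl)) ≤ δ := by
      calc specNorm ((1 - Ul * Ulᵀ) * (X - Xl))
          ≤ specNorm (1 - Ul * Ulᵀ) * specNorm (X - Xl) := spec_mul_le _ _
        _ ≤ 1 * δ := by
            refine mul_le_mul (spec_proj hUl) (le_of_eq ?_) (spec_nonneg _) zero_le_one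
            rw [hδdef]; exact spec_sub_comm X Xl
        _ = δ := one_mul δ
    have f2 : specNorm (V * S') ≤ σ⁻¹ := by
      calc specNorm (V * S') ≤ specNorm V * specNorm S' := spec_mul_le _ _
        _ ≤ 1 * σ⁻¹ := mul_le_mul (spec_orth hV) hspecS' (spec_nonneg _) zero_le_one
        _ = σ⁻¹ := one_mul _
    have e1 : (1 - Ul * Ulᵀ) * U = ((1 - Ul * Ulᵀ) * (X - Xl)) * (V * S') := by
      rw [Matrix.mul_sub, hkill, sub_zero, Matrix.mul_assoc, hXVS]
    rw [e1]
    calc specNorm ((1 - Ul * Ulᵀ) * (X - Xl) * (V * S'))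
        ≤ specNorm ((1 - Ul * Ulᵀ) * (X - Xl)) * specNorm (V * S') := spec_mul_le _ _
      _ ≤ δ * σ⁻¹ := mul_le_mul f1 f2 (spec_nonneg _) hδ0
      _ = c := (div_eq_mul_inv δ σ).symm
  have hb : specNorm ((1 - U * Uᵀ) * Ul) ≤ c := by
    by_cases hcase : 1 ≤ c
    · calc specNorm ((1 - U * Uᵀ) * Ul)
          ≤ specNorm (1 - U * Uᵀ) * specNorm Ul := spec_mul_le _ _
        _ ≤ 1 * 1 := mul_le_mul (spec_proj hU) (spec_orth hUl) (spec_nonneg _) zero_le_one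
        _ = 1 := one_mul 1
        _ ≤ c := hcase
    · push_neg at hcase
      have ht : 0 < 1 - c ^ 2 := by nlinarith
      set B : Matrix (Fin r) (Fin r) ℝ := Uᵀ * Ul with hBdef
      have hBt : Bᵀ = Ulᵀ * U := by
        rw [hBdef, Matrix.transpose_mul, Matrix.transpose_transpose]
      have hBtz : ∀ z, (1 - c ^ 2) * (z ⬝ᵥ z) ≤ (Bᵀ *ᵥ z) ⬝ᵥ (Bᵀ *ᵥ z) := by
        intro z
        have h2 : euclNorm (((1 - Ul * Ulᵀ) * U) *ᵥ z) ≤ c * euclNorm z :=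
          (spec_mulVec_le _ _).trans (mul_le_mul_of_nonneg_right ha (euclNorm_nonneg z))
        have h4 : (euclNorm (((1 - Ul * Ulᵀ) * U) *ᵥ z)) ^ 2 ≤ (c * euclNorm z) ^ 2 :=
          pow_le_pow_left₀ (euclNorm_nonneg _) h2 2
        rw [sq_euclNorm] at h4
        have h3 : (((1 - Ul * Ulᵀ) * U) *ᵥ z) ⬝ᵥ (((1 - Ul * Ulᵀ) * U) *ᵥ z)
            ≤ c ^ 2 * (z ⬝ᵥ z) := by
          calc _ ≤ (c * euclNorm z) ^ 2 := h4
            _ = c ^ 2 * (euclNorm z) ^ 2 := by ring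
            _ = c ^ 2 * (z ⬝ᵥ z) := by rw [sq_euclNorm]
        rw [sin_sq hUl hU z] at h3
        rw [hBt]
        linarith
      have hinj : Function.Injective (Bᵀ).mulVec := by
        intro z w hzw
        have h5 : Bᵀ *ᵥ (z - w) = 0 := by
          rw [Matrix.mulVec_sub, hzw, sub_self]
        have h6 := hBtz (z - w)
        rw [h5, dotProduct_zero] at h6
        have h7 : (z - w) ⬝ᵥ (z - w) ≤ 0 := by nlinarith
        have h8 : (z - w) ⬝ᵥ (z - w) = 0 := le_antisymm h7 (dot_self_nonneg _)
        have := dotProduct_self_eq_zero.mp h8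
        exact sub_eq_zero.mp this
      have hunit : IsUnit Bᵀ := Matrix.mulVec_injective_iff_isUnit.mp hinj
      have hdetBt : IsUnit (Bᵀ).det := (Matrix.isUnit_iff_isUnit_det _).mp hunit
      have hdet : IsUnit B.det := by rwa [Matrix.det_transpose] at hdetBt
      have hBinv : B⁻¹ * B = 1 := Matrix.nonsing_inv_mul B hdet
      have hBtinv : Bᵀ * (Bᵀ)⁻¹ = 1 := Matrix.mul_nonsing_inv _ hdetBt
      set t : ℝ := Real.sqrt (1 - c ^ 2) with htdef
      have ht0 : 0 < t := Real.sqrt_pos.mpr ht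
      have ht2 : t ^ 2 = 1 - c ^ 2 := Real.sq_sqrt ht.le
      have hspecBti : specNorm (Bᵀ)⁻¹ ≤ t⁻¹ := by
        refine spec_le_bound _ (inv_nonneg.mpr ht0.le) fun x => ?_
        refine en_le_of_sq (inv_nonneg.mpr ht0.le) ?_
        have h6 := hBtz ((Bᵀ)⁻¹ *ᵥ x)
        rw [Matrix.mulVec_mulVec, hBtinv, Matrix.one_mulVec] at h6
        have ht2pos : 0 < t ^ 2 := by positivity
        calc ((Bᵀ)⁻¹ *ᵥ x) ⬝ᵥ ((Bᵀ)⁻¹ *ᵥ x)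
            = (t ^ 2)⁻¹ * (t ^ 2 * (((Bᵀ)⁻¹ *ᵥ x) ⬝ᵥ ((Bᵀ)⁻¹ *ᵥ x))) := by
              field_simp
          _ ≤ (t ^ 2)⁻¹ * (x ⬝ᵥ x) := by
              refine mul_le_mul_of_nonneg_left ?_ (inv_nonneg.mpr ht2pos.le)
              rw [ht2]; exact h6
          _ = t⁻¹ ^ 2 * (x ⬝ᵥ x) := by rw [inv_pow]
      have hspecBi : specNorm B⁻¹ ≤ t⁻¹ := by
        rw [← spec_transpose, Matrix.transpose_nonsing_inv]
        exact hspecBti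
      have hBz : ∀ y, euclNorm y ≤ t⁻¹ * euclNorm (B *ᵥ y) := by
        intro y
        have hy : y = B⁻¹ *ᵥ (B *ᵥ y) := by
          rw [Matrix.mulVec_mulVec, hBinv, Matrix.one_mulVec]
        calc euclNorm y = euclNorm (B⁻¹ *ᵥ (B *ᵥ y)) := by rw [← hy]
          _ ≤ specNorm B⁻¹ * euclNorm (B *ᵥ y) := spec_mulVec_le _ _
          _ ≤ t⁻¹ * euclNorm (B *ᵥ y) :=
              mul_le_mul_of_nonneg_right hspecBi (euclNorm_nonneg _)
      refine spec_le_bound _ hc0 fun y => ?_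
      refine en_le_of_sq hc0 ?_
      have h7 := sin_sq hU hUl y
      rw [← hBdef] at h7
      rw [h7]
      have h9 : t * euclNorm y ≤ euclNorm (B *ᵥ y) := by
        calc t * euclNorm y ≤ t * (t⁻¹ * euclNorm (B *ᵥ y)) :=
              mul_le_mul_of_nonneg_left (hBz y) ht0.le
          _ = euclNorm (B *ᵥ y) := by field_simp
      have h8 : t ^ 2 * (y ⬝ᵥ y) ≤ (B *ᵥ y) ⬝ᵥ (B *ᵥ y) := by
        have h10 := mul_le_mul h9 h9 (mul_nonneg ht0.le (euclNorm_nonneg y))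
          (euclNorm_nonneg _)
        calc t ^ 2 * (y ⬝ᵥ y) = (t * euclNorm y) * (t * euclNorm y) := by
              rw [← sq_euclNorm]; ring
          _ ≤ euclNorm (B *ᵥ y) * euclNorm (B *ᵥ y) := h10
          _ = (B *ᵥ y) ⬝ᵥ (B *ᵥ y) := by rw [← sq_euclNorm]; ring
      rw [ht2] at h8
      linarith
  -- final combination
  have hPP : (U * Uᵀ) * (U * Uᵀ) = U * Uᵀ := by
    rw [Matrix.mul_assoc U Uᵀ _, cancel hU]
  have hspec_u : specNorm ((Ul * Ulᵀ) * (1 - U * Uᵀ)) ≤ c := by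
    have e : (Ul * Ulᵀ) * (1 - U * Uᵀ) = ((1 - U * Uᵀ) * (Ul * Ulᵀ))ᵀ := by
      rw [Matrix.transpose_mul, proj_symm, Matrix.transpose_mul, Matrix.transpose_transpose]
    rw [e, spec_transpose, ← Matrix.mul_assoc]
    calc specNorm ((1 - U * Uᵀ) * Ul * Ulᵀ)
        ≤ specNorm ((1 - U * Uᵀ) * Ul) * specNorm Ulᵀ := spec_mul_le _ _
      _ ≤ c * 1 := mul_le_mul hb (spec_orth_t hUl) (spec_nonneg _) hc0
      _ = c := mul_one c
  have hspec_v : specNorm ((1 - Ul * Ulᵀ) * (U * Uᵀ)) ≤ c := by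
    rw [← Matrix.mul_assoc]
    calc specNorm ((1 - Ul * Ulᵀ) * U * Uᵀ)
        ≤ specNorm ((1 - Ul * Ulᵀ) * U) * specNorm Uᵀ := spec_mul_le _ _
      _ ≤ c * 1 := mul_le_mul ha (spec_orth_t hU) (spec_nonneg _) hc0
      _ = c := mul_one c
  have hmat : Ul * Ulᵀ - U * Uᵀ
      = (Ul * Ulᵀ) * (1 - U * Uᵀ) - (1 - Ul * Ulᵀ) * (U * Uᵀ) := by
    simp only [Matrix.mul_sub, Matrix.sub_mul, Matrix.mul_one, Matrix.one_mul]
    abel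
  have hperp : ((Ul * Ulᵀ) * (1 - U * Uᵀ))ᵀ * ((1 - Ul * Ulᵀ) * (U * Uᵀ)) = 0 := by
    have h1 : ((Ul * Ulᵀ) * (1 - U * Uᵀ))ᵀ = (1 - U * Uᵀ) * (Ul * Ulᵀ) := by
      rw [Matrix.transpose_mul, proj_symm, Matrix.transpose_mul, Matrix.transpose_transpose]
    have h2 : (Ul * Ulᵀ) * ((1 - Ul * Ulᵀ) * (U * Uᵀ)) = 0 := by
      simp only [Matrix.mul_sub, Matrix.sub_mul, Matrix.one_mul, Matrix.mul_one,
        Matrix.mul_assoc, cancel hUl]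
      exact sub_self _
    rw [h1, Matrix.mul_assoc, h2, Matrix.mul_zero]
  refine spec_le_bound _ hc0 fun x => ?_
  refine en_le_of_sq hc0 ?_
  set u : Fin m → ℝ := ((Ul * Ulᵀ) * (1 - U * Uᵀ)) *ᵥ x with hudef
  set v : Fin m → ℝ := ((1 - Ul * Ulᵀ) * (U * Uᵀ)) *ᵥ x with hvdef
  have huv : u ⬝ᵥ v = 0 := by
    rw [hudef, hvdef, dotmm, hperp, Matrix.zero_mulVec, dotProduct_zero]
  have hvu : v ⬝ᵥ u = 0 := by rw [dotProduct_comm]; exact huv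
  have hu : euclNorm u ≤ c * euclNorm ((1 - U * Uᵀ) *ᵥ x) := by
    have e : u = ((Ul * Ulᵀ) * (1 - U * Uᵀ)) *ᵥ ((1 - U * Uᵀ) *ᵥ x) := by
      rw [hudef, Matrix.mulVec_mulVec,
        Matrix.mul_assoc (Ul * Ulᵀ) (1 - U * Uᵀ) (1 - U * Uᵀ), proj_idem hU]
    rw [e]
    exact (spec_mulVec_le _ _).trans
      (mul_le_mul_of_nonneg_right hspec_u (euclNorm_nonneg _))
  have hv : euclNorm v ≤ c * euclNorm ((U * Uᵀ) *ᵥ x) := by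
    have e : v = ((1 - Ul * Ulᵀ) * (U * Uᵀ)) *ᵥ ((U * Uᵀ) *ᵥ x) := by
      rw [hvdef, Matrix.mulVec_mulVec,
        Matrix.mul_assoc (1 - Ul * Ulᵀ) (U * Uᵀ) (U * Uᵀ), hPP]
    rw [e]
    exact (spec_mulVec_le _ _).trans
      (mul_le_mul_of_nonneg_right hspec_v (euclNorm_nonneg _))
  have hud : u ⬝ᵥ u ≤ c ^ 2 * (((1 - U * Uᵀ) *ᵥ x) ⬝ᵥ ((1 - U * Uᵀ) *ᵥ x)) := by
    have h4 := pow_le_pow_left₀ (euclNorm_nonneg u) hu 2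
    rw [sq_euclNorm] at h4
    calc u ⬝ᵥ u ≤ (c * euclNorm ((1 - U * Uᵀ) *ᵥ x)) ^ 2 := h4
      _ = c ^ 2 * (euclNorm ((1 - U * Uᵀ) *ᵥ x)) ^ 2 := by ring
      _ = _ := by rw [sq_euclNorm]
  have hvd : v ⬝ᵥ v ≤ c ^ 2 * (((U * Uᵀ) *ᵥ x) ⬝ᵥ ((U * Uᵀ) *ᵥ x)) := by
    have h4 := pow_le_pow_left₀ (euclNorm_nonneg v) hv 2
    rw [sq_euclNorm] at h4
    calc v ⬝ᵥ v ≤ (c * euclNorm ((U * Uᵀ) *ᵥ x)) ^ 2 := h4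
      _ = c ^ 2 * (euclNorm ((U * Uᵀ) *ᵥ x)) ^ 2 := by ring
      _ = _ := by rw [sq_euclNorm]
  have hsplit : x ⬝ᵥ x = (((U * Uᵀ) *ᵥ x) ⬝ᵥ ((U * Uᵀ) *ᵥ x))
      + (((1 - U * Uᵀ) *ᵥ x) ⬝ᵥ ((1 - U * Uᵀ) *ᵥ x)) := by
    rw [dotmm, dotmm, proj_symm, proj_idem hU]
    have e2 : (U * Uᵀ)ᵀ * (U * Uᵀ) = U * Uᵀ := by
      rw [Matrix.transpose_mul, Matrix.transpose_transpose, hPP]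
    rw [e2, Matrix.sub_mulVec, dotProduct_sub, Matrix.one_mulVec]
    ring
  have hdec : (Ul * Ulᵀ - U * Uᵀ) *ᵥ x = u - v := by
    rw [hmat, Matrix.sub_mulVec, hudef, hvdef]
  rw [hdec, sub_dotProduct, dotProduct_sub, dotProduct_sub, huv, hvu,
    hsplit]
  linarith

lemma isDiag_transpose_eq {r : ℕ} {T : Matrix (Fin r) (Fin r) ℝ} (hT : T.IsDiag) :
    Tᵀ = T := by
  ext i j
  by_cases h : i = j
  · subst h; rfl
  · rw [Matrix.transpose_apply, hT h, hT (Ne.symm h)]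

end SSB


/-- Lemma 2, spectral-norm part: for rank-`r` matrices `X_l = U_l Σ_l V_lᵀ` and
`X = U Σ Vᵀ`, `‖U_l U_lᵀ − U Uᵀ‖₂ ≤ ‖X_l − X‖₂ / σ_min(X)` and
`‖V_l V_lᵀ − V Vᵀ‖₂ ≤ ‖X_l − X‖₂ / σ_min(X)`. -/
theorem singular_subspace_spectral_bound {m n r : ℕ}
    (hr : 0 < r)
    (Xl X : Matrix (Fin m) (Fin n) ℝ)
    (hrankXl : Xl.rank = r) (hrankX : X.rank = r)
    (Ul U : Matrix (Fin m) (Fin r) ℝ) (Vl V : Matrix (Fin n) (Fin r) ℝ)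
    (Sl S : Matrix (Fin r) (Fin r) ℝ)
    (hUl : Ulᵀ * Ul = 1) (hVl : Vlᵀ * Vl = 1)
    (hU : Uᵀ * U = 1) (hV : Vᵀ * V = 1)
    (hSl : Sl.IsDiag ∧ ∀ i, 0 < Sl i i) (hS : S.IsDiag ∧ ∀ i, 0 < S i i)
    (hXlsvd : Xl = Ul * Sl * Vlᵀ) (hXsvd : X = U * S * Vᵀ) :
    specNorm (Ul * Ulᵀ - U * Uᵀ) ≤ specNorm (Xl - X) / (⨅ i, S i i) ∧
      specNorm (Vl * Vlᵀ - V * Vᵀ) ≤ specNorm (Xl - X) / (⨅ i, S i i) := by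
  constructor
  · exact SSB.aux hr Xl X Ul U Vl V Sl S hUl hVl hU hV hSl hS hXlsvd hXsvd
  · have hXlT : Xlᵀ = Vl * Sl * Ulᵀ := by
      rw [hXlsvd, Matrix.transpose_mul, Matrix.transpose_mul, Matrix.transpose_transpose,
        SSB.isDiag_transpose_eq hSl.1, Matrix.mul_assoc]
    have hXT : Xᵀ = V * S * Uᵀ := by
      rw [hXsvd, Matrix.transpose_mul, Matrix.transpose_mul, Matrix.transpose_transpose,
        SSB.isDiag_transpose_eq hS.1, Matrix.mul_assoc]
    have h2 := SSB.aux hr Xlᵀ Xᵀ Vl V Ul U Sl S hVl hUl hV hU hSl hS hXlT hXT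
    rwa [show Xlᵀ - Xᵀ = (Xl - X)ᵀ from (Matrix.transpose_sub _ _).symm,
      SSB.spec_transpose] at h2
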